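/- Strong law for visit frequencies of an irreducible finite-state Markov chain (equation (map2)): let P be an irreducible stochastic matrix on a finite nonempty type X with stationary probability vector π, and let (X_i)_{i≥1} be a Markov chain with transition matrix P and arbitrary initial distribution. Then for every x ∈ X, almost surely the empirical visit frequency W^{−1} · ∑_{i=1}^{W} 1[X_i = x] converges to π(x) as W → ∞. -/

import Mathlib

open MeasureTheory Filter
open ProbabilityTheory

/-- A stochastic matrix on a finite type: nonnegative entries, rows summing to one. -/
def IsStochastic {X : Type*} [Fintype X] (P : X → X → ℝ) : Prop :=
  (∀ x y, 0 ≤ P x y) ∧ ∀ x, ∑ y, P x y = 1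

/-- Irreducibility: any state can be reached from any state in some number `n ≥ 1` of steps. -/
def IsIrreducibleMC {X : Type*} [Fintype X] [DecidableEq X] (P : X → X → ℝ) : Prop :=
  ∀ x y, ∃ n : ℕ, 1 ≤ n ∧ 0 < (Matrix.of P ^ n) x y

/-- A stationary probability vector for `P`: nonnegative, summing to one, and invariant. -/
def IsStationaryProbVector {X : Type*} [Fintype X] (P : X → X → ℝ) (π : X → ℝ) : Prop :=
  (∀ x, 0 ≤ π x) ∧ (∑ x, π x = 1) ∧ ∀ y, π y = ∑ x, π x * P x y

/-- `Xs` is a Markov chain with transition matrix `P` (and arbitrary initial distribution):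
each `Xs t` is measurable, and conditional on any history of positive probability the next
state is distributed according to `P`, expressed in product form. -/
def IsMarkovChain {X : Type*} [Fintype X] [MeasurableSpace X] [MeasurableSingletonClass X]
    {Ω : Type*} [MeasurableSpace Ω] (μ : Measure Ω)
    (P : X → X → ℝ) (Xs : ℕ → Ω → X) : Prop :=
  (∀ t, Measurable (Xs t)) ∧
  ∀ (t : ℕ) (path : ℕ → X) (y : X),
    μ {ω | ∀ s ≤ t, Xs s ω = path s} ≠ 0 →
    (μ {ω | (∀ s ≤ t, Xs s ω = path s) ∧ Xs (t + 1) ω = y}).toReal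
      = (μ {ω | ∀ s ≤ t, Xs s ω = path s}).toReal * P (path t) y

namespace VFSL
variable {X : Type*} [Fintype X] [Nonempty X] [DecidableEq X]

lemma pow_nonneg' {P : X → X → ℝ} (hP : IsStochastic P) (n : ℕ) (a b : X) :
    0 ≤ (Matrix.of P ^ n) a b := by
  induction n generalizing a b with
  | zero => simp [Matrix.one_apply]; positivity
  | succ n ih =>
    rw [pow_succ, Matrix.mul_apply]
    exact Finset.sum_nonneg fun c _ => mul_nonneg (ih a c) (hP.1 c b)

lemma pow_row_sum {P : X → X → ℝ} (hP : IsStochastic P) (n : ℕ) (a : X) :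
    ∑ b, (Matrix.of P ^ n) a b = 1 := by
  induction n with
  | zero => simp [Matrix.one_apply]
  | succ n ih =>
    simp only [pow_succ, Matrix.mul_apply]
    rw [Finset.sum_comm]
    calc ∑ c, ∑ b, (Matrix.of P ^ n) a c * P c b
        = ∑ c, (Matrix.of P ^ n) a c * ∑ b, P c b := by
          simp [Finset.mul_sum]
      _ = 1 := by simp only [hP.2, mul_one]; exact ih

lemma pow_le_one' {P : X → X → ℝ} (hP : IsStochastic P) (n : ℕ) (a b : X) :
    (Matrix.of P ^ n) a b ≤ 1 := by
  calc (Matrix.of P ^ n) a b ≤ ∑ c, (Matrix.of P ^ n) a c :=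
        Finset.single_le_sum (fun c _ => pow_nonneg' hP n a c) (Finset.mem_univ b)
    _ = 1 := pow_row_sum hP n a

/-- harmonic functions are constant -/
lemma harmonic_const {P : X → X → ℝ} (hP : IsStochastic P) (hirr : IsIrreducibleMC P)
    (v : X → ℝ) (hv : (Matrix.of P).mulVec v = v) :
    ∀ a b : X, v a = v b := by
  obtain ⟨a, _, ha⟩ := Finset.exists_max_image Finset.univ v
    ⟨Classical.arbitrary X, Finset.mem_univ _⟩
  have hvpow : ∀ n, (Matrix.of P ^ n).mulVec v = v := by
    intro n; induction n with
    | zero => simp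
    | succ n ih => rw [pow_succ, ← Matrix.mulVec_mulVec, hv, ih]
  have key : ∀ n y, 0 < (Matrix.of P ^ n) a y → v y = v a := by
    intro n y hpos
    by_contra hne
    have hlt : v y < v a := lt_of_le_of_ne (ha y (Finset.mem_univ y)) hne
    have h1 : v a = ∑ c, (Matrix.of P ^ n) a c * v c := by
      conv_lhs => rw [← hvpow n]
      rfl
    have h2 : ∑ c, (Matrix.of P ^ n) a c * v c < ∑ c, (Matrix.of P ^ n) a c * v a :=
      Finset.sum_lt_sum
        (fun c _ => mul_le_mul_of_nonneg_left (ha c (Finset.mem_univ c)) (pow_nonneg' hP n a c))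
        ⟨y, Finset.mem_univ y, mul_lt_mul_of_pos_left hlt hpos⟩
    rw [← Finset.sum_mul, pow_row_sum hP n, one_mul] at h2
    exact absurd (h1 ▸ h2) (lt_irrefl _)
  intro b c
  obtain ⟨n, _, hn⟩ := hirr a b
  obtain ⟨m, _, hm⟩ := hirr a c
  rw [key n b hn, key m c hm]

/-- The matrix with all rows equal to π. -/
def PiMat (π : X → ℝ) : Matrix X X ℝ := Matrix.of fun _ y => π y

section fund
variable {P : X → X → ℝ} {π : X → ℝ}

lemma A_mul_Pi (hP : IsStochastic P) : Matrix.of P * PiMat π = PiMat (X := X) π := by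
  ext a b
  simp only [Matrix.mul_apply, PiMat, Matrix.of_apply]
  rw [← Finset.sum_mul, hP.2, one_mul]

lemma Pi_mul_A (hπ : IsStationaryProbVector P π) : PiMat (X := X) π * Matrix.of P = PiMat π := by
  ext a b
  simp only [Matrix.mul_apply, PiMat, Matrix.of_apply]
  exact (hπ.2.2 b).symm

lemma Pi_mul_Pi (hπ : IsStationaryProbVector P π) : PiMat (X := X) π * PiMat π = PiMat π := by
  ext a b
  simp only [Matrix.mul_apply, PiMat, Matrix.of_apply]
  rw [← Finset.sum_mul, hπ.2.1, one_mul]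

lemma Apow_mul_Pi (hP : IsStochastic P) (n : ℕ) :
    (Matrix.of P) ^ n * PiMat π = PiMat (X := X) π := by
  induction n with
  | zero => simp
  | succ n ih => rw [pow_succ, mul_assoc, A_mul_Pi hP, ih]

/-- Q^k = P^k - Π for k ≥ 1 -/
lemma Q_pow (hP : IsStochastic P) (hπ : IsStationaryProbVector P π) (k : ℕ) (hk : 1 ≤ k) :
    (Matrix.of P - PiMat π) ^ k = (Matrix.of P) ^ k - PiMat π := by
  induction k with
  | zero => omega
  | succ k ih =>
    rcases Nat.eq_or_lt_of_le hk with h | h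
    · simp [← h]
    · have hk1 : 1 ≤ k := by omega
      rw [pow_succ, ih hk1, sub_mul, mul_sub, mul_sub, Apow_mul_Pi hP, Pi_mul_A hπ,
        Pi_mul_Pi hπ, ← pow_succ]
      abel

lemma fund_det_ne_zero (hP : IsStochastic P) (hirr : IsIrreducibleMC P)
    (hπ : IsStationaryProbVector P π) :
    (1 - (Matrix.of P - PiMat π)).det ≠ 0 := by
  intro hdet
  obtain ⟨v, hv0, hv⟩ := (Matrix.exists_mulVec_eq_zero_iff).2 hdet
  rw [Matrix.sub_mulVec, Matrix.sub_mulVec, Matrix.one_mulVec, sub_sub_eq_add_sub,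
    sub_eq_zero] at hv
  -- hv : v + Π v = P v
  set c : ℝ := ∑ y, π y * v y with hc
  have hPiv : (PiMat π).mulVec v = fun _ => c := by
    ext a; simp [PiMat, Matrix.mulVec, dotProduct, hc]
  -- π · (P v) = π · v
  have hdot : ∀ w : X → ℝ, ∑ a, π a * ((Matrix.of P).mulVec w) a = ∑ a, π a * w a := by
    intro w
    simp only [Matrix.mulVec, dotProduct, Finset.mul_sum, Matrix.of_apply]
    rw [Finset.sum_comm]
    refine Finset.sum_congr rfl fun b _ => ?_
    calc ∑ a, π a * (P a b * w b) = (∑ a, π a * P a b) * w b := by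
          rw [Finset.sum_mul]; exact Finset.sum_congr rfl fun a _ => by ring
      _ = π b * w b := by rw [← hπ.2.2 b]
  have hc0 : c = 0 := by
    have := hdot v
    rw [← hv] at this
    simp only [Pi.add_apply, hPiv] at this
    simp only [mul_add, Finset.sum_add_distrib, ← Finset.sum_mul, hπ.2.1, one_mul] at this
    linarith
  have hharm : (Matrix.of P).mulVec v = v := by
    rw [← hv, hPiv, hc0]; ext a; simp
  have hconst := harmonic_const hP hirr v hharm
  -- v constant, and c = ∑ π v = v a₀ = 0
  obtain ⟨a₀⟩ := (inferInstance : Nonempty X)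
  have : v a₀ = 0 := by
    have : c = v a₀ := by
      rw [hc]
      calc ∑ y, π y * v y = ∑ y, π y * v a₀ := by
            congr 1; ext y; rw [hconst y a₀]
        _ = v a₀ := by rw [← Finset.sum_mul, hπ.2.1, one_mul]
    rw [← this, hc0]
  exact hv0 (funext fun b => by rw [hconst b a₀, this]; rfl)

end fund

section bound
variable {P : X → X → ℝ} {π : X → ℝ}

lemma geom_sum_Q {R : Type*} [Ring R] (Q : R) (m : ℕ) :
    (1 - Q) * (∑ k ∈ Finset.Icc 1 m, Q ^ k) = Q - Q ^ (m + 1) := by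
  induction m with
  | zero => simp
  | succ m ih =>
    rw [Finset.sum_Icc_succ_top (by omega : 1 ≤ m + 1), mul_add, ih, sub_mul, one_mul,
      ← pow_succ']
    abel

lemma pi_le_one (hπ : IsStationaryProbVector P π) (j : X) : π j ≤ 1 := by
  calc π j ≤ ∑ y, π y := Finset.single_le_sum (fun y _ => hπ.1 y) (Finset.mem_univ j)
    _ = 1 := hπ.2.1

lemma partial_sum_bound (hP : IsStochastic P) (hirr : IsIrreducibleMC P)
    (hπ : IsStationaryProbVector P π) :
    ∃ C : ℝ, 0 ≤ C ∧ ∀ (m : ℕ) (i j : X),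
      |∑ k ∈ Finset.Icc 1 m, ((Matrix.of P ^ k) i j - π j)| ≤ C := by
  classical
  set Q : Matrix X X ℝ := Matrix.of P - PiMat π with hQ
  have hdet : IsUnit (1 - Q).det :=
    isUnit_iff_ne_zero.2 (fund_det_ne_zero hP hirr hπ)
  set Z : Matrix X X ℝ := (1 - Q)⁻¹ with hZ
  have hZinv : Z * (1 - Q) = 1 := Matrix.nonsing_inv_mul _ hdet
  refine ⟨2 * ∑ a, ∑ b, |Z a b|, by positivity, fun m i j => ?_⟩
  have hQk : ∀ k, 1 ≤ k → ∀ a b, |(Q ^ k) a b| ≤ 1 := by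
    intro k hk a b
    rw [Q_pow hP hπ k hk]
    rw [Matrix.sub_apply]
    rw [abs_le]
    constructor
    · have := pow_nonneg' hP k a b
      have := pi_le_one hπ (b : X)
      simp only [PiMat, Matrix.of_apply]
      linarith
    · have := pow_le_one' hP k a b
      have := hπ.1 b
      simp only [PiMat, Matrix.of_apply]
      linarith
  have hsum : (∑ k ∈ Finset.Icc 1 m, Q ^ k) = Z * (Q - Q ^ (m + 1)) := by
    calc (∑ k ∈ Finset.Icc 1 m, Q ^ k)
        = Z * ((1 - Q) * (∑ k ∈ Finset.Icc 1 m, Q ^ k)) := by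
          rw [← mul_assoc, hZinv, one_mul]
      _ = Z * (Q - Q ^ (m + 1)) := by rw [geom_sum_Q]
  have happ : ∑ k ∈ Finset.Icc 1 m, ((Matrix.of P ^ k) i j - π j)
      = (∑ k ∈ Finset.Icc 1 m, Q ^ k) i j := by
    rw [Matrix.sum_apply]
    refine Finset.sum_congr rfl fun k hk => ?_
    rw [Q_pow hP hπ k (Finset.mem_Icc.1 hk).1, Matrix.sub_apply]
    rfl
  rw [happ, hsum, Matrix.mul_apply]
  calc |∑ c, Z i c * (Q - Q ^ (m + 1)) c j|
      ≤ ∑ c, |Z i c * (Q - Q ^ (m + 1)) c j| := Finset.abs_sum_le_sum_abs _ _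
    _ ≤ ∑ c, |Z i c| * 2 := by
        refine Finset.sum_le_sum fun c _ => ?_
        rw [abs_mul]
        refine mul_le_mul_of_nonneg_left ?_ (abs_nonneg _)
        rw [Matrix.sub_apply]
        calc |Q c j - (Q ^ (m + 1)) c j| ≤ |Q c j| + |(Q ^ (m + 1)) c j| := abs_sub _ _
          _ ≤ 1 + 1 := add_le_add (by simpa using hQk 1 le_rfl c j) (hQk (m + 1) (by omega) c j)
          _ = 2 := by norm_num
    _ ≤ 2 * ∑ a, ∑ b, |Z a b| := by
        rw [← Finset.sum_mul]
        rw [mul_comm]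
        refine mul_le_mul_of_nonneg_left ?_ (by norm_num)
        exact Finset.single_le_sum (f := fun a => ∑ b, |Z a b|)
          (fun a _ => Finset.sum_nonneg fun b _ => abs_nonneg _) (Finset.mem_univ i)

end bound
end VFSL




namespace VFSL
variable {X : Type*} [Fintype X] [Nonempty X] [DecidableEq X]
  [MeasurableSpace X] [MeasurableSingletonClass X]
  {Ω : Type*} [MeasurableSpace Ω] {μ : Measure Ω} [IsProbabilityMeasure μ]
  {P : X → X → ℝ} {Xs : ℕ → Ω → X}

/-- extend a finite history to `ℕ → X` -/
def histExt (t : ℕ) (v : Fin (t + 1) → X) : ℕ → X :=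
  fun s => if h : s < t + 1 then v ⟨s, h⟩ else v ⟨0, Nat.succ_pos t⟩

lemma histExt_eq (t : ℕ) (v : Fin (t + 1) → X) {s : ℕ} (hs : s ≤ t) :
    histExt t v s = v ⟨s, Nat.lt_succ_of_le hs⟩ := by
  simp [histExt, Nat.lt_succ_of_le hs]

lemma measurable_cyl (hmeas : ∀ t, Measurable (Xs t)) (t : ℕ) (p : ℕ → X) :
    MeasurableSet {ω | ∀ s ≤ t, Xs s ω = p s} := by
  have : {ω | ∀ s ≤ t, Xs s ω = p s} = ⋂ (s : ℕ) (_ : s ≤ t), (Xs s) ⁻¹' {p s} := by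
    ext ω; simp [Set.mem_iInter]
  rw [this]
  exact MeasurableSet.iInter fun s => MeasurableSet.iInter fun _ =>
    (hmeas s) (measurableSet_singleton _)

/-- partition of an event by the value of one coordinate -/
lemma LemB (hmeas : ∀ t, Measurable (Xs t)) (G : Set Ω) (hG : MeasurableSet G) (i : ℕ) :
    (μ G).toReal = ∑ c, (μ (G ∩ {ω | Xs i ω = c})).toReal := by
  have hdisj : ((Finset.univ : Finset X) : Set X).PairwiseDisjoint
      (fun c => G ∩ {ω | Xs i ω = c}) := by
    intro c _ c' _ hcc'
    simp only [Function.onFun, Set.disjoint_left]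
    rintro ω ⟨_, h1⟩ ⟨_, h2⟩
    exact hcc' (h1 ▸ h2 ▸ rfl)
  have hmeasc : ∀ c ∈ Finset.univ, MeasurableSet (G ∩ {ω | Xs i ω = c}) := fun c _ =>
    hG.inter ((hmeas i) (measurableSet_singleton _))
  have hcover : G = ⋃ c ∈ Finset.univ, G ∩ {ω | Xs i ω = c} := by
    ext ω
    simp only [Set.mem_iUnion, Finset.mem_univ, Set.mem_inter_iff, Set.mem_setOf_eq]
    exact ⟨fun h => ⟨Xs i ω, trivial, h, rfl⟩, fun ⟨c, _, h, _⟩ => h⟩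
  conv_lhs => rw [hcover]
  rw [measure_biUnion_finset hdisj hmeasc, ENNReal.toReal_sum fun c _ => measure_ne_top μ _]

/-- partition of a history-determined event (intersected with anything) into cylinders -/
lemma LemA (hmeas : ∀ t, Measurable (Xs t)) (t : ℕ) (D : (ℕ → X) → Prop) [DecidablePred D]
    (hD : ∀ p q : ℕ → X, (∀ s ≤ t, p s = q s) → D p → D q)
    (G : Set Ω) (hG : MeasurableSet G) :
    (μ ({ω | D (fun s => Xs s ω)} ∩ G)).toReal
      = ∑ v : Fin (t + 1) → X, if D (histExt t v) then
          (μ ({ω | ∀ s ≤ t, Xs s ω = histExt t v s} ∩ G)).toReal else 0 := by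
  have hdisj : (((Finset.univ.filter fun v : Fin (t+1) → X => D (histExt t v)) :
      Finset (Fin (t+1) → X)) : Set (Fin (t+1) → X)).PairwiseDisjoint
      (fun v => {ω | ∀ s ≤ t, Xs s ω = histExt t v s} ∩ G) := by
    intro v _ v' _ hvv'
    simp only [Function.onFun, Set.disjoint_left]
    rintro ω ⟨h1, _⟩ ⟨h2, _⟩
    refine hvv' (funext fun s => ?_)
    have e1 := h1 s (Nat.lt_succ_iff.1 s.isLt)
    have e2 := h2 s (Nat.lt_succ_iff.1 s.isLt)
    rw [histExt_eq t v (Nat.lt_succ_iff.1 s.isLt)] at e1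
    rw [histExt_eq t v' (Nat.lt_succ_iff.1 s.isLt)] at e2
    simpa using e1.symm.trans e2
  have hmeasv : ∀ v ∈ (Finset.univ.filter fun v : Fin (t+1) → X => D (histExt t v)),
      MeasurableSet ({ω | ∀ s ≤ t, Xs s ω = histExt t v s} ∩ G) := fun v _ =>
    (measurable_cyl hmeas t _).inter hG
  have hcover : {ω | D (fun s => Xs s ω)} ∩ G
      = ⋃ v ∈ (Finset.univ.filter fun v : Fin (t+1) → X => D (histExt t v)),
          ({ω | ∀ s ≤ t, Xs s ω = histExt t v s} ∩ G) := by
    ext ω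
    simp only [Set.mem_iUnion, Finset.mem_filter, Finset.mem_univ, true_and,
      Set.mem_inter_iff, Set.mem_setOf_eq]
    constructor
    · rintro ⟨hDω, hGω⟩
      set v : Fin (t+1) → X := fun s => Xs s.1 ω with hv
      have agr : ∀ s ≤ t, histExt t v s = Xs s ω := fun s hs => by
        rw [histExt_eq t v hs]
      exact ⟨v, hD _ _ (fun s hs => (agr s hs).symm) hDω, fun s hs => (agr s hs).symm, hGω⟩
    · rintro ⟨v, hv, hcyl, hGω⟩
      exact ⟨hD _ _ (fun s hs => (hcyl s hs).symm) hv, hGω⟩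
  rw [hcover, measure_biUnion_finset hdisj hmeasv,
    ENNReal.toReal_sum fun v _ => measure_ne_top μ _, Finset.sum_filter]

/-- one-step conditioning on a full cylinder -/
lemma F1 (hchain : IsMarkovChain μ P Xs) (t : ℕ) (p : ℕ → X) (y : X) :
    (μ ({ω | ∀ s ≤ t, Xs s ω = p s} ∩ {ω | Xs (t+1) ω = y})).toReal
      = (μ {ω | ∀ s ≤ t, Xs s ω = p s}).toReal * P (p t) y := by
  have hset : {ω | ∀ s ≤ t, Xs s ω = p s} ∩ {ω | Xs (t+1) ω = y}
      = {ω | (∀ s ≤ t, Xs s ω = p s) ∧ Xs (t+1) ω = y} := rfl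
  by_cases h : μ {ω | ∀ s ≤ t, Xs s ω = p s} = 0
  · rw [hset]
    have h1 : μ {ω | (∀ s ≤ t, Xs s ω = p s) ∧ Xs (t+1) ω = y} = 0 :=
      le_antisymm (h ▸ measure_mono fun ω hω => hω.1) (zero_le)
    rw [h1, h]
    simp
  · rw [hset]; exact hchain.2 t p y h

/-- one-step conditioning on a history-determined event with known last coordinate -/
lemma L1 (hchain : IsMarkovChain μ P Xs) (t : ℕ) (D : (ℕ → X) → Prop) [DecidablePred D]
    (hD : ∀ p q : ℕ → X, (∀ s ≤ t, p s = q s) → D p → D q)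
    (c : X) (hDc : ∀ p, D p → p t = c) (y : X) :
    (μ ({ω | D (fun s => Xs s ω)} ∩ {ω | Xs (t+1) ω = y})).toReal
      = (μ {ω | D (fun s => Xs s ω)}).toReal * P c y := by
  have hmeas := hchain.1
  rw [LemA hmeas t D hD {ω | Xs (t+1) ω = y}
    (by exact (hmeas (t+1)) (measurableSet_singleton y))]
  have huniv : (μ {ω | D (fun s => Xs s ω)}).toReal
      = ∑ v : Fin (t + 1) → X, if D (histExt t v) then
          (μ {ω | ∀ s ≤ t, Xs s ω = histExt t v s}).toReal else 0 := by
    have := LemA (μ := μ) (Xs := Xs) hmeas t D hD Set.univ MeasurableSet.univ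
    simpa using this
  rw [huniv, Finset.sum_mul]
  refine Finset.sum_congr rfl fun v _ => ?_
  by_cases hv : D (histExt t v)
  · simp only [hv, if_true]
    rw [F1 hchain t _ y]
    congr 2
    exact hDc _ hv
  · simp [hv]

end VFSL

namespace VFSL2
open VFSL
variable {X : Type*} [Fintype X] [Nonempty X] [DecidableEq X]
  [MeasurableSpace X] [MeasurableSingletonClass X]
  {Ω : Type*} [MeasurableSpace Ω] {μ : Measure Ω} [IsProbabilityMeasure μ]
  {P : X → X → ℝ} {Xs : ℕ → Ω → X}

/-- one-step evolution of the marginal law -/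
lemma m1_step (hchain : IsMarkovChain μ P Xs) (i : ℕ) (b : X) :
    (μ {ω | Xs (i+1) ω = b}).toReal
      = ∑ c, (μ {ω | Xs i ω = c}).toReal * P c b := by
  have hmeas := hchain.1
  rw [LemB hmeas {ω | Xs (i+1) ω = b}
    (by exact (hmeas (i+1)) (measurableSet_singleton b)) i]
  refine Finset.sum_congr rfl fun c _ => ?_
  have hset : {ω | Xs (i+1) ω = b} ∩ {ω | Xs i ω = c}
      = {ω | (fun p : ℕ → X => p i = c) (fun s => Xs s ω)} ∩ {ω | Xs (i+1) ω = b} := by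
    ext ω; simp only [Set.mem_inter_iff, Set.mem_setOf_eq]; tauto
  rw [hset, L1 hchain i (fun p => p i = c) (fun p q hpq hp => (hpq i le_rfl).symm.trans hp)
    c (fun p hp => hp) b]

/-- marginal law via matrix powers -/
lemma m1_pow (hchain : IsMarkovChain μ P Xs) (i : ℕ) (b : X) :
    (μ {ω | Xs i ω = b}).toReal
      = ∑ a, (μ {ω | Xs 0 ω = a}).toReal * (Matrix.of P ^ i) a b := by
  induction i generalizing b with
  | zero =>
    rw [Finset.sum_eq_single b]
    · simp [Matrix.one_apply]
    · intro a _ hab; simp [Matrix.one_apply, hab]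
    · intro h; exact absurd (Finset.mem_univ b) h
  | succ i ih =>
    rw [m1_step hchain i b]
    calc ∑ c, (μ {ω | Xs i ω = c}).toReal * P c b
        = ∑ c, ∑ a, (μ {ω | Xs 0 ω = a}).toReal * (Matrix.of P ^ i) a c * P c b := by
          refine Finset.sum_congr rfl fun c _ => ?_
          rw [ih c, Finset.sum_mul]
      _ = ∑ a, (μ {ω | Xs 0 ω = a}).toReal * (Matrix.of P ^ (i+1)) a b := by
          rw [Finset.sum_comm]
          refine Finset.sum_congr rfl fun a _ => ?_
          rw [pow_succ, Matrix.mul_apply, Finset.mul_sum]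
          refine Finset.sum_congr rfl fun c _ => by
            simp only [Matrix.of_apply]; ring

/-- two-point law -/
lemma m2_pow (hchain : IsMarkovChain μ P Xs) (i k : ℕ) (a b : X) :
    (μ ({ω | Xs i ω = a} ∩ {ω | Xs (i+k) ω = b})).toReal
      = (μ {ω | Xs i ω = a}).toReal * (Matrix.of P ^ k) a b := by
  have hmeas := hchain.1
  induction k generalizing b with
  | zero =>
    by_cases hab : a = b
    · subst hab
      simp only [Nat.add_zero, Set.inter_self]
      simp [Matrix.one_apply]
    · have : {ω | Xs i ω = a} ∩ {ω | Xs (i+0) ω = b} = ∅ := by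
        ext ω; simp only [Set.mem_inter_iff, Set.mem_setOf_eq, Set.mem_empty_iff_false,
          iff_false, not_and, Nat.add_zero]
        intro h1 h2; exact hab (h1 ▸ h2 ▸ rfl)
      rw [this]
      simp [Matrix.one_apply, hab]
  | succ k ih =>
    have key : ∀ c, (μ ({ω | Xs i ω = a} ∩ {ω | Xs (i+(k+1)) ω = b} ∩ {ω | Xs (i+k) ω = c})).toReal
        = (μ {ω | Xs i ω = a}).toReal * (Matrix.of P ^ k) a c * P c b := by
      intro c
      have hset : {ω | Xs i ω = a} ∩ {ω | Xs (i+(k+1)) ω = b} ∩ {ω | Xs (i+k) ω = c}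
          = {ω | (fun p : ℕ → X => p i = a ∧ p (i+k) = c) (fun s => Xs s ω)}
            ∩ {ω | Xs ((i+k)+1) ω = b} := by
        ext ω
        simp only [Set.mem_inter_iff, Set.mem_setOf_eq]
        constructor
        · rintro ⟨⟨h1, h2⟩, h3⟩; exact ⟨⟨h1, h3⟩, h2⟩
        · rintro ⟨⟨h1, h3⟩, h2⟩; exact ⟨⟨h1, h2⟩, h3⟩
      rw [hset, L1 hchain (i+k) (fun p => p i = a ∧ p (i+k) = c)
        (fun p q hpq hp => ⟨(hpq i (by omega)).symm.trans hp.1,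
          (hpq (i+k) le_rfl).symm.trans hp.2⟩)
        c (fun p hp => hp.2) b]
      have : {ω | (fun p : ℕ → X => p i = a ∧ p (i+k) = c) (fun s => Xs s ω)}
          = {ω | Xs i ω = a} ∩ {ω | Xs (i+k) ω = c} := rfl
      rw [this, ih c]
    rw [LemB hmeas ({ω | Xs i ω = a} ∩ {ω | Xs (i+(k+1)) ω = b})
      (((hmeas i) (measurableSet_singleton a)).inter
        ((hmeas (i+(k+1))) (measurableSet_singleton b))) (i+k)]
    calc ∑ c, (μ ({ω | Xs i ω = a} ∩ {ω | Xs (i+(k+1)) ω = b} ∩ {ω | Xs (i+k) ω = c})).toReal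
        = ∑ c, (μ {ω | Xs i ω = a}).toReal * (Matrix.of P ^ k) a c * P c b := by
          exact Finset.sum_congr rfl fun c _ => key c
      _ = (μ {ω | Xs i ω = a}).toReal * (Matrix.of P ^ (k+1)) a b := by
          rw [pow_succ, Matrix.mul_apply, Finset.mul_sum]
          refine Finset.sum_congr rfl fun c _ => by
            simp only [Matrix.of_apply]; ring

/-- total mass of initial distribution -/
lemma m1_total (hchain : IsMarkovChain μ P Xs) (i : ℕ) :
    ∑ a, (μ {ω | Xs i ω = a}).toReal = 1 := by
  have hmeas := hchain.1
  have := LemB (μ := μ) hmeas Set.univ MeasurableSet.univ i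
  simp only [Set.univ_inter, measure_univ, ENNReal.toReal_one] at this
  exact this.symm

end VFSL2


namespace VFSL3
-- pure Finset double-sum symmetric decomposition
lemma double_sum_symm {g : ℕ → ℕ → ℝ} (hsymm : ∀ i j, g i j = g j i) (T : Finset ℕ) :
    ∑ i ∈ T, ∑ j ∈ T, g i j
      = ∑ i ∈ T, g i i + 2 * ∑ i ∈ T, ∑ j ∈ T.filter (fun j => i < j), g i j := by
  classical
  have split : ∀ i ∈ T, ∑ j ∈ T, g i j
      = g i i + (∑ j ∈ T.filter (fun j => i < j), g i j
          + ∑ j ∈ T.filter (fun j => j < i), g i j) := by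
    intro i hi
    rw [← Finset.sum_filter_add_sum_filter_not T (fun j => j = i)]
    congr 1
    · rw [Finset.filter_eq' T i, if_pos hi, Finset.sum_singleton]
    · rw [← Finset.sum_filter_add_sum_filter_not (T.filter fun j => ¬ j = i) (fun j => i < j)]
      congr 1
      · rw [Finset.filter_filter]
        congr 1
        apply Finset.filter_congr
        intro j _; constructor
        · rintro ⟨h1, h2⟩; exact h2
        · intro h; exact ⟨by omega, h⟩
      · rw [Finset.filter_filter]
        congr 1
        apply Finset.filter_congr
        intro j _; constructor
        · rintro ⟨h1, h2⟩; omega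
        · intro h; constructor <;> omega
  rw [Finset.sum_congr rfl split, Finset.sum_add_distrib, Finset.sum_add_distrib]
  have swap : ∑ i ∈ T, ∑ j ∈ T.filter (fun j => j < i), g i j
      = ∑ i ∈ T, ∑ j ∈ T.filter (fun j => i < j), g i j := by
    rw [Finset.sum_comm' (s' := fun j => T.filter (fun i => j < i)) (t' := T)
      (by intro x y; simp only [Finset.mem_filter]; tauto)]
    refine Finset.sum_congr rfl fun j _ => Finset.sum_congr rfl fun i _ => hsymm i j
  rw [swap]; ring
end VFSL3

namespace VFSL4
open VFSL VFSL2 VFSL3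
variable {X : Type*} [Fintype X] [Nonempty X] [DecidableEq X]
  [MeasurableSpace X] [MeasurableSingletonClass X]
  {Ω : Type*} [MeasurableSpace Ω] {μ : Measure Ω} [IsProbabilityMeasure μ]
  {P : X → X → ℝ} {Xs : ℕ → Ω → X} {x : X}

section moments
variable (hchain : IsMarkovChain μ P Xs)

lemma f_eq_indicator (i : ℕ) :
    (fun ω => if Xs i ω = x then (1:ℝ) else 0)
      = Set.indicator {ω | Xs i ω = x} (fun _ => (1:ℝ)) := by
  ext ω; simp [Set.indicator_apply]

lemma measurable_f (hmeas : ∀ t, Measurable (Xs t)) (i : ℕ) :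
    Measurable (fun ω => if Xs i ω = x then (1:ℝ) else 0) := by
  rw [f_eq_indicator]
  exact measurable_const.indicator ((hmeas i) (measurableSet_singleton x))

lemma integrable_f (hmeas : ∀ t, Measurable (Xs t)) (i : ℕ) :
    Integrable (fun ω => if Xs i ω = x then (1:ℝ) else 0) μ := by
  rw [f_eq_indicator]
  exact (integrable_const (1:ℝ)).indicator ((hmeas i) (measurableSet_singleton x))

lemma integral_f (hmeas : ∀ t, Measurable (Xs t)) (i : ℕ) :
    ∫ ω, (if Xs i ω = x then (1:ℝ) else 0) ∂μ = (μ {ω | Xs i ω = x}).toReal := by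
  rw [f_eq_indicator]
  have := integral_indicator_one (μ := μ) ((hmeas i) (measurableSet_singleton x))
  simpa [Pi.one_def, measureReal_def, Set.preimage] using this

lemma ff_eq_indicator (i j : ℕ) :
    (fun ω => (if Xs i ω = x then (1:ℝ) else 0) * (if Xs j ω = x then (1:ℝ) else 0))
      = Set.indicator ({ω | Xs i ω = x} ∩ {ω | Xs j ω = x}) (fun _ => (1:ℝ)) := by
  ext ω
  by_cases h1 : Xs i ω = x <;> by_cases h2 : Xs j ω = x <;>
    simp [Set.indicator_apply, Set.mem_inter_iff, h1, h2]

lemma integral_ff (hmeas : ∀ t, Measurable (Xs t)) (i j : ℕ) :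
    ∫ ω, (if Xs i ω = x then (1:ℝ) else 0) * (if Xs j ω = x then (1:ℝ) else 0) ∂μ
      = (μ ({ω | Xs i ω = x} ∩ {ω | Xs j ω = x})).toReal := by
  rw [ff_eq_indicator]
  have hms : MeasurableSet ({ω | Xs i ω = x} ∩ {ω | Xs j ω = x}) :=
    ((hmeas i) (measurableSet_singleton x)).inter ((hmeas j) (measurableSet_singleton x))
  have := integral_indicator_one (μ := μ) hms
  simpa [Pi.one_def, measureReal_def] using this

/-- the partial-sum random variable -/
lemma integral_S (hmeas : ∀ t, Measurable (Xs t)) (W : ℕ) :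
    ∫ ω, (∑ i ∈ Finset.Ioc 0 W, if Xs i ω = x then (1:ℝ) else 0) ∂μ
      = ∑ i ∈ Finset.Ioc 0 W, (μ {ω | Xs i ω = x}).toReal := by
  rw [integral_finset_sum _ (fun i _ => integrable_f hmeas i)]
  exact Finset.sum_congr rfl fun i _ => integral_f hmeas i

lemma integral_S_sq (hmeas : ∀ t, Measurable (Xs t)) (W : ℕ) :
    ∫ ω, (∑ i ∈ Finset.Ioc 0 W, if Xs i ω = x then (1:ℝ) else 0)^2 ∂μ
      = ∑ i ∈ Finset.Ioc 0 W, ∑ j ∈ Finset.Ioc 0 W,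
          (μ ({ω | Xs i ω = x} ∩ {ω | Xs j ω = x})).toReal := by
  have hexp : ∀ ω, (∑ i ∈ Finset.Ioc 0 W, if Xs i ω = x then (1:ℝ) else 0)^2
      = ∑ i ∈ Finset.Ioc 0 W, ∑ j ∈ Finset.Ioc 0 W,
          (if Xs i ω = x then (1:ℝ) else 0) * (if Xs j ω = x then (1:ℝ) else 0) := by
    intro ω; rw [sq, Finset.sum_mul_sum]
  simp only [hexp]
  rw [integral_finset_sum _ (fun i _ => ?_)]
  · refine Finset.sum_congr rfl fun i _ => ?_
    rw [integral_finset_sum _ (fun j _ => ?_)]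
    · exact Finset.sum_congr rfl fun j _ => integral_ff hmeas i j
    · rw [ff_eq_indicator]
      exact (integrable_const (1:ℝ)).indicator
        (((hmeas i) (measurableSet_singleton x)).inter ((hmeas j) (measurableSet_singleton x)))
  · apply integrable_finset_sum
    intro j _
    rw [ff_eq_indicator]
    exact (integrable_const (1:ℝ)).indicator
      (((hmeas i) (measurableSet_singleton x)).inter ((hmeas j) (measurableSet_singleton x)))

lemma memLp_S (hmeas : ∀ t, Measurable (Xs t)) (W : ℕ) :
    MemLp (fun ω => (∑ i ∈ Finset.Ioc 0 W, if Xs i ω = x then (1:ℝ) else 0)) 2 μ := by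
  refine MemLp.of_bound ?_ (W : ℝ) ?_
  · exact (Finset.measurable_sum _ fun i _ => measurable_f hmeas i).aestronglyMeasurable
  · filter_upwards with ω
    rw [Real.norm_eq_abs, abs_le]
    constructor
    · have : (0:ℝ) ≤ ∑ i ∈ Finset.Ioc 0 W, if Xs i ω = x then (1:ℝ) else 0 :=
        Finset.sum_nonneg fun i _ => by positivity
      have hW : (0:ℝ) ≤ W := Nat.cast_nonneg W
      linarith
    · calc (∑ i ∈ Finset.Ioc 0 W, if Xs i ω = x then (1:ℝ) else 0)
          ≤ ∑ i ∈ Finset.Ioc 0 W, 1 := Finset.sum_le_sum fun i _ => by split <;> norm_num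
        _ = (W : ℝ) := by simp

lemma variance_S (hmeas : ∀ t, Measurable (Xs t)) (W : ℕ) :
    variance (fun ω => (∑ i ∈ Finset.Ioc 0 W, if Xs i ω = x then (1:ℝ) else 0)) μ
      = ∑ i ∈ Finset.Ioc 0 W, ∑ j ∈ Finset.Ioc 0 W,
          ((μ ({ω | Xs i ω = x} ∩ {ω | Xs j ω = x})).toReal
            - (μ {ω | Xs i ω = x}).toReal * (μ {ω | Xs j ω = x}).toReal) := by
  rw [variance_eq_sub (memLp_S hmeas W)]
  have h2 : ∫ ω, ((fun ω => (∑ i ∈ Finset.Ioc 0 W, if Xs i ω = x then (1:ℝ) else 0))^2) ω ∂μ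
      = ∫ ω, (∑ i ∈ Finset.Ioc 0 W, if Xs i ω = x then (1:ℝ) else 0)^2 ∂μ := rfl
  rw [h2, integral_S_sq hmeas W, integral_S hmeas W, sq, Finset.sum_mul_sum,
    ← Finset.sum_sub_distrib]
  exact Finset.sum_congr rfl fun i _ => by rw [← Finset.sum_sub_distrib]

lemma eP_nonneg (i : ℕ) : 0 ≤ (μ {ω | Xs i ω = x}).toReal := ENNReal.toReal_nonneg

lemma eP_le_one (i : ℕ) : (μ {ω | Xs i ω = x}).toReal ≤ 1 := by
  calc (μ {ω | Xs i ω = x}).toReal ≤ (μ Set.univ).toReal :=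
        ENNReal.toReal_mono (measure_ne_top μ _) (measure_mono (Set.subset_univ _))
    _ = 1 := by simp

end moments

section bounds
variable {π : X → ℝ} {C : ℝ}
variable (hchain : IsMarkovChain μ P Xs) (hπ : IsStationaryProbVector P π)
variable (hC : ∀ (m : ℕ) (a b : X), |∑ k ∈ Finset.Ioc 0 m, ((Matrix.of P ^ k) a b - π b)| ≤ C)
include hchain hC

/-- bound on `∑_{j ∈ Ioc i W} (P^j a x - π x)`. -/
lemma hC2 (i W : ℕ) (hiW : i ≤ W) (a : X) :
    |∑ j ∈ Finset.Ioc i W, ((Matrix.of P ^ j) a x - π x)| ≤ 2 * C := by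
  have hsplit := Finset.sum_Ioc_consecutive
    (f := fun j => ((Matrix.of P ^ j) a x - π x)) (Nat.zero_le i) hiW
  have h1 := hC i a x
  have h2 := hC W a x
  have : ∑ j ∈ Finset.Ioc i W, ((Matrix.of P ^ j) a x - π x)
      = ∑ j ∈ Finset.Ioc 0 W, ((Matrix.of P ^ j) a x - π x)
        - ∑ j ∈ Finset.Ioc 0 i, ((Matrix.of P ^ j) a x - π x) := by
    rw [← hsplit]; ring
  rw [this]
  calc |_ - _| ≤ |∑ j ∈ Finset.Ioc 0 W, ((Matrix.of P ^ j) a x - π x)|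
        + |∑ j ∈ Finset.Ioc 0 i, ((Matrix.of P ^ j) a x - π x)| := abs_sub _ _
    _ ≤ C + C := add_le_add h2 h1
    _ = 2 * C := by ring

/-- `eP j - π x` as a ν-average -/
lemma eP_diff (j : ℕ) :
    (μ {ω | Xs j ω = x}).toReal - π x
      = ∑ a, (μ {ω | Xs 0 ω = a}).toReal * ((Matrix.of P ^ j) a x - π x) := by
  have h1 := m1_pow hchain j x
  have h2 : π x = ∑ a, (μ {ω | Xs 0 ω = a}).toReal * π x := by
    rw [← Finset.sum_mul, m1_total hchain 0, one_mul]
  calc (μ {ω | Xs j ω = x}).toReal - π x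
      = ∑ a, (μ {ω | Xs 0 ω = a}).toReal * (Matrix.of P ^ j) a x
        - ∑ a, (μ {ω | Xs 0 ω = a}).toReal * π x := by rw [← h1, ← h2]
    _ = ∑ a, ((μ {ω | Xs 0 ω = a}).toReal * (Matrix.of P ^ j) a x
        - (μ {ω | Xs 0 ω = a}).toReal * π x) := by rw [Finset.sum_sub_distrib]
    _ = _ := Finset.sum_congr rfl fun a _ => by ring

/-- averaged partial-sum bound for the marginals -/
lemma eP_partial (s : Finset ℕ) (B : ℝ)
    (hB : ∀ a : X, |∑ j ∈ s, ((Matrix.of P ^ j) a x - π x)| ≤ B) :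
    |∑ j ∈ s, ((μ {ω | Xs j ω = x}).toReal - π x)| ≤ B := by
  have hBnn : 0 ≤ B := le_trans (abs_nonneg _) (hB (Classical.arbitrary X))
  calc |∑ j ∈ s, ((μ {ω | Xs j ω = x}).toReal - π x)|
      = |∑ a, (μ {ω | Xs 0 ω = a}).toReal * ∑ j ∈ s, ((Matrix.of P ^ j) a x - π x)| := by
        congr 1
        rw [Finset.sum_congr rfl fun j (_ : j ∈ s) => eP_diff hchain hC j, Finset.sum_comm]
        exact Finset.sum_congr rfl fun a _ => by rw [Finset.mul_sum]
    _ ≤ ∑ a, |(μ {ω | Xs 0 ω = a}).toReal * ∑ j ∈ s, ((Matrix.of P ^ j) a x - π x)| :=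
        Finset.abs_sum_le_sum_abs _ _
    _ ≤ ∑ a, (μ {ω | Xs 0 ω = a}).toReal * B := by
        refine Finset.sum_le_sum fun a _ => ?_
        rw [abs_mul, abs_of_nonneg (eP_nonneg 0)]
        exact mul_le_mul_of_nonneg_left (hB a) (eP_nonneg 0)
    _ = B := by rw [← Finset.sum_mul, m1_total hchain 0, one_mul]

/-- bound on the mean -/
lemma mean_bound (W : ℕ) :
    |∑ i ∈ Finset.Ioc 0 W, (μ {ω | Xs i ω = x}).toReal - W * π x| ≤ C := by
  have hcard : (Finset.Ioc 0 W).card = W := by simp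
  have : ∑ i ∈ Finset.Ioc 0 W, (μ {ω | Xs i ω = x}).toReal - W * π x
      = ∑ i ∈ Finset.Ioc 0 W, ((μ {ω | Xs i ω = x}).toReal - π x) := by
    rw [Finset.sum_sub_distrib, Finset.sum_const, hcard, nsmul_eq_mul]
  rw [this]
  exact eP_partial hchain hC (Finset.Ioc 0 W) C (fun a => hC W a x)

/-- reindexing -/
lemma reindex_Ioc (i W : ℕ) (hiW : i ≤ W) (F : ℕ → ℝ) :
    ∑ j ∈ Finset.Ioc i W, F (j - i) = ∑ k ∈ Finset.Ioc 0 (W - i), F k := by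
  have hmap : Finset.Ioc i W = Finset.map (addLeftEmbedding i) (Finset.Ioc 0 (W - i)) := by
    rw [Finset.map_add_left_Ioc]
    congr 1 <;> omega
  rw [hmap, Finset.sum_map]
  refine Finset.sum_congr rfl fun k _ => ?_
  congr 1
  simp [addLeftEmbedding_apply]

/-- the row bound -/
lemma row_bound (i W : ℕ) (hiW : i ≤ W) :
    |∑ j ∈ Finset.Ioc i W, ((Matrix.of P ^ (j - i)) x x - (μ {ω | Xs j ω = x}).toReal)|
      ≤ 3 * C := by
  have hsplit : ∑ j ∈ Finset.Ioc i W,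
      ((Matrix.of P ^ (j - i)) x x - (μ {ω | Xs j ω = x}).toReal)
      = ∑ j ∈ Finset.Ioc i W, ((Matrix.of P ^ (j - i)) x x - π x)
        - ∑ j ∈ Finset.Ioc i W, ((μ {ω | Xs j ω = x}).toReal - π x) := by
    rw [← Finset.sum_sub_distrib]
    exact Finset.sum_congr rfl fun j _ => by ring
  rw [hsplit]
  have h1 : |∑ j ∈ Finset.Ioc i W, ((Matrix.of P ^ (j - i)) x x - π x)| ≤ C := by
    rw [reindex_Ioc hchain hC i W hiW (fun k => (Matrix.of P ^ k) x x - π x)]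
    exact hC (W - i) x x
  have h2 : |∑ j ∈ Finset.Ioc i W, ((μ {ω | Xs j ω = x}).toReal - π x)| ≤ 2 * C :=
    eP_partial hchain hC _ _ (fun a => hC2 hchain hC i W hiW a)
  calc |_ - _| ≤ _ + _ := abs_sub _ _
    _ ≤ C + 2 * C := add_le_add h1 h2
    _ = 3 * C := by ring

/-- the variance bound -/
lemma var_bound (W : ℕ) :
    variance (fun ω => (∑ i ∈ Finset.Ioc 0 W, if Xs i ω = x then (1:ℝ) else 0)) μ
      ≤ (1 + 6 * C) * W := by
  have hCnn : 0 ≤ C := by simpa using hC 0 x x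
  have hmeas := hchain.1
  rw [variance_S hmeas W]
  set g : ℕ → ℕ → ℝ := fun i j => (μ ({ω | Xs i ω = x} ∩ {ω | Xs j ω = x})).toReal
    - (μ {ω | Xs i ω = x}).toReal * (μ {ω | Xs j ω = x}).toReal with hg
  have hsymm : ∀ i j, g i j = g j i := by
    intro i j; simp only [hg]
    rw [Set.inter_comm]; ring
  rw [double_sum_symm hsymm]
  have hgform : ∀ i j, i ≤ j → g i j
      = (μ {ω | Xs i ω = x}).toReal * ((Matrix.of P ^ (j - i)) x x
          - (μ {ω | Xs j ω = x}).toReal) := by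
    intro i j hij
    have := m2_pow hchain i (j - i) x x
    rw [Nat.add_sub_cancel' hij] at this
    simp only [hg]
    rw [this]; ring
  have hdiag : ∑ i ∈ Finset.Ioc 0 W, g i i ≤ W := by
    calc ∑ i ∈ Finset.Ioc 0 W, g i i ≤ ∑ i ∈ Finset.Ioc 0 W, 1 := by
          refine Finset.sum_le_sum fun i _ => ?_
          have h1 := hgform i i le_rfl
          simp only [Nat.sub_self, pow_zero, Matrix.one_apply_eq] at h1
          rw [h1]
          have := eP_nonneg (μ := μ) (Xs := Xs) (x := x) i
          have := eP_le_one (μ := μ) (Xs := Xs) (x := x) i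
          nlinarith
      _ = W := by simp
  have hoff : ∀ i ∈ Finset.Ioc 0 W,
      ∑ j ∈ (Finset.Ioc 0 W).filter (fun j => i < j), g i j ≤ 3 * C := by
    intro i hi
    have hiW : i ≤ W := (Finset.mem_Ioc.1 hi).2
    have hfilt : (Finset.Ioc 0 W).filter (fun j => i < j) = Finset.Ioc i W := by
      ext j; simp only [Finset.mem_filter, Finset.mem_Ioc]; omega
    rw [hfilt]
    have : ∑ j ∈ Finset.Ioc i W, g i j
        = (μ {ω | Xs i ω = x}).toReal * ∑ j ∈ Finset.Ioc i W,
            ((Matrix.of P ^ (j - i)) x x - (μ {ω | Xs j ω = x}).toReal) := by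
      rw [Finset.mul_sum]
      refine Finset.sum_congr rfl fun j hj => ?_
      exact hgform i j (le_of_lt (Finset.mem_Ioc.1 hj).1)
    rw [this]
    calc (μ {ω | Xs i ω = x}).toReal * ∑ j ∈ Finset.Ioc i W,
          ((Matrix.of P ^ (j - i)) x x - (μ {ω | Xs j ω = x}).toReal)
        ≤ |(μ {ω | Xs i ω = x}).toReal * ∑ j ∈ Finset.Ioc i W,
          ((Matrix.of P ^ (j - i)) x x - (μ {ω | Xs j ω = x}).toReal)| := le_abs_self _
      _ ≤ 1 * (3 * C) := by
          rw [abs_mul]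
          exact mul_le_mul (by rw [abs_of_nonneg (eP_nonneg i)]; exact eP_le_one i)
            (row_bound hchain hC i W hiW) (abs_nonneg _) zero_le_one
      _ = 3 * C := by ring
  calc ∑ i ∈ Finset.Ioc 0 W, g i i
        + 2 * ∑ i ∈ Finset.Ioc 0 W, ∑ j ∈ (Finset.Ioc 0 W).filter (fun j => i < j), g i j
      ≤ W + 2 * ∑ i ∈ Finset.Ioc 0 W, (3 * C) := by
        refine add_le_add hdiag ?_
        refine mul_le_mul_of_nonneg_left ?_ (by norm_num)
        exact Finset.sum_le_sum hoff
    _ = W + 2 * (W * (3 * C)) := by rw [Finset.sum_const, Nat.card_Ioc, Nat.sub_zero, nsmul_eq_mul]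
    _ = (1 + 6 * C) * W := by ring

end bounds
end VFSL4

namespace VFSL5

lemma sqrt_tendsto : Tendsto Nat.sqrt atTop atTop :=
  tendsto_atTop_atTop.2 fun k => ⟨k * k, fun n hn => Nat.le_sqrt.2 hn⟩

lemma ratio_lower : Tendsto (fun m : ℕ => (m : ℝ) ^ 2 / ((m : ℝ) + 1) ^ 2) atTop (nhds 1) := by
  have h := (tendsto_natCast_div_add_atTop (1 : ℝ)).pow 2
  simp only [one_pow] at h
  convert h using 2 with m
  rw [div_pow]

lemma ratio_upper : Tendsto (fun m : ℕ => ((m : ℝ) + 1) ^ 2 / (m : ℝ) ^ 2) atTop (nhds 1) := by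
  have h1 : Tendsto (fun m : ℕ => ((m : ℝ) + 1) / m) atTop (nhds 1) := by
    have h2 : Tendsto (fun m : ℕ => 1 + 1 / (m : ℝ)) atTop (nhds (1 + 0)) :=
      tendsto_const_nhds.add tendsto_one_div_atTop_nhds_zero_nat
    rw [add_zero] at h2
    refine h2.congr' ?_
    filter_upwards [eventually_ge_atTop 1] with m hm
    have : (m : ℝ) ≠ 0 := by positivity
    field_simp
  have h := h1.pow 2
  simp only [one_pow] at h
  convert h using 2 with m
  rw [div_pow]

lemma glue {u : ℕ → ℝ} (h0 : u 0 = 0) (hmono : ∀ n, u n ≤ u (n + 1)) {L : ℝ}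
    (hL : Tendsto (fun m : ℕ => u (m ^ 2) / ((m : ℝ) ^ 2)) atTop (nhds L)) :
    Tendsto (fun n : ℕ => u n / (n : ℝ)) atTop (nhds L) := by
  have hmon : Monotone u := monotone_nat_of_le_succ hmono
  have hnn : ∀ n, 0 ≤ u n := fun n => h0 ▸ hmon (Nat.zero_le n)
  -- lower and upper comparison sequences
  have hlow : Tendsto (fun m : ℕ => u (m ^ 2) / ((m : ℝ) + 1) ^ 2) atTop (nhds L) := by
    have : Tendsto (fun m : ℕ => (u (m ^ 2) / ((m : ℝ) ^ 2)) * ((m : ℝ) ^ 2 / ((m : ℝ) + 1) ^ 2))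
        atTop (nhds (L * 1)) := hL.mul ratio_lower
    rw [mul_one] at this
    refine this.congr' ?_
    filter_upwards [eventually_ge_atTop 1] with m hm
    have hm0 : ((m : ℝ)) ^ 2 ≠ 0 := by
      have : (1:ℝ) ≤ (m:ℝ) := by exact_mod_cast hm
      positivity
    field_simp
  have hup : Tendsto (fun m : ℕ => u ((m + 1) ^ 2) / ((m : ℝ)) ^ 2) atTop (nhds L) := by
    have hshift : Tendsto (fun m : ℕ => u ((m + 1) ^ 2) / (((m : ℝ) + 1) ^ 2)) atTop (nhds L) := by
      have := (tendsto_add_atTop_iff_nat 1).2 hL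
      refine this.congr fun m => ?_
      push_cast
      ring_nf
    have : Tendsto (fun m : ℕ => (u ((m + 1) ^ 2) / (((m : ℝ) + 1) ^ 2))
        * (((m : ℝ) + 1) ^ 2 / (m : ℝ) ^ 2)) atTop (nhds (L * 1)) := hshift.mul ratio_upper
    rw [mul_one] at this
    refine this.congr' ?_
    filter_upwards [eventually_ge_atTop 1] with m hm
    have hm1 : ((m : ℝ) + 1) ^ 2 ≠ 0 := by positivity
    field_simp
  -- squeeze
  refine tendsto_of_tendsto_of_tendsto_of_le_of_le'
    ((hlow.comp sqrt_tendsto)) ((hup.comp sqrt_tendsto)) ?_ ?_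
  · filter_upwards [eventually_ge_atTop 1] with n hn
    set m := Nat.sqrt n with hm
    have hm1 : 1 ≤ m := Nat.le_sqrt.2 (by omega)
    have hlo : m ^ 2 ≤ n := Nat.sqrt_le' n
    have hhi : n < (m + 1) ^ 2 := Nat.lt_succ_sqrt' n
    have hnR : (0:ℝ) < n := by exact_mod_cast hn
    have h1 : u (m ^ 2) / ((m : ℝ) + 1) ^ 2 ≤ u (m ^ 2) / n := by
      apply div_le_div_of_nonneg_left (hnn _) hnR
      have : (n:ℝ) < ((m:ℝ) + 1) ^ 2 := by exact_mod_cast hhi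
      linarith
    have h2 : u (m ^ 2) / (n : ℝ) ≤ u n / n := by
      gcongr
      exact hmon hlo
    exact le_trans h1 h2
  · filter_upwards [eventually_ge_atTop 1] with n hn
    set m := Nat.sqrt n with hm
    have hm1 : 1 ≤ m := Nat.le_sqrt.2 (by omega)
    have hlo : m ^ 2 ≤ n := Nat.sqrt_le' n
    have hhi : n ≤ (m + 1) ^ 2 := le_of_lt (Nat.lt_succ_sqrt' n)
    have hnR : (0:ℝ) < n := by exact_mod_cast hn
    have hmR : (0:ℝ) < (m:ℝ) ^ 2 := by
      have : (1:ℝ) ≤ (m:ℝ) := by exact_mod_cast hm1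
      positivity
    have h1 : u n / (n : ℝ) ≤ u ((m + 1) ^ 2) / n := by
      gcongr
      exact hmon hhi
    have h2 : u ((m + 1) ^ 2) / (n : ℝ) ≤ u ((m + 1) ^ 2) / (m : ℝ) ^ 2 := by
      apply div_le_div_of_nonneg_left (hnn _) hmR
      exact_mod_cast hlo
    exact le_trans h1 h2
end VFSL5



set_option maxHeartbeats 2000000 in
open VFSL VFSL2 VFSL3 VFSL4 VFSL5 in
/-- **Strong law for visit frequencies of an irreducible finite-state Markov chain
(equation (map2)).**  If `P` is an irreducible stochastic matrix on a finite nonempty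
type `X` with stationary probability vector `π`, and `Xs` is a Markov chain with
transition matrix `P` and arbitrary initial distribution, then for every state `x`,
almost surely the empirical visit frequency `W⁻¹ ∑_{i=1}^{W} 1[X_i = x]` converges to
`π x` as `W → ∞`. -/
theorem visit_frequency_strong_law
    {X : Type*} [Fintype X] [Nonempty X] [DecidableEq X]
    [MeasurableSpace X] [MeasurableSingletonClass X]
    (P : X → X → ℝ) (hP : IsStochastic P) (hirr : IsIrreducibleMC P)
    (π : X → ℝ) (hπ : IsStationaryProbVector P π)
    {Ω : Type*} [MeasurableSpace Ω] (μ : Measure Ω) [IsProbabilityMeasure μ]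
    (Xs : ℕ → Ω → X) (hchain : IsMarkovChain μ P Xs) (x : X) :
    ∀ᵐ ω ∂μ,
      Tendsto
        (fun W : ℕ =>
          (∑ i ∈ Finset.Icc 1 W, if Xs i ω = x then (1 : ℝ) else 0) / W)
        atTop (nhds (π x)) := by
  classical
  have hmeas := hchain.1
  obtain ⟨C, hC0, hCbd⟩ := partial_sum_bound hP hirr hπ
  have hIcc : ∀ W : ℕ, Finset.Icc 1 W = Finset.Ioc 0 W := fun W => by
    ext j; simp only [Finset.mem_Icc, Finset.mem_Ioc]; omega
  have hC : ∀ (m : ℕ) (a b : X),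
      |∑ k ∈ Finset.Ioc 0 m, ((Matrix.of P ^ k) a b - π b)| ≤ C := fun m a b => by
    rw [← hIcc m]; exact hCbd m a b
  set K : ℝ := 1 + 6 * C with hK
  have hK0 : 0 < K := by positivity
  -- Chebyshev sets along squares (shifted index)
  set s : ℕ → ℕ → Set Ω := fun j m =>
    {ω | (1:ℝ)/((j:ℝ)+1) * ((m:ℝ)+1)^2
      ≤ |(∑ i ∈ Finset.Ioc 0 ((m+1)^2), if Xs i ω = x then (1:ℝ) else 0)
          - ∑ i ∈ Finset.Ioc 0 ((m+1)^2), (μ {ω' | Xs i ω' = x}).toReal|} with hs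
  have hcheb : ∀ j m : ℕ, μ (s j m)
      ≤ ENNReal.ofReal (K * ((j:ℝ)+1)^2 / ((m:ℝ)+1)^2) := by
    intro j m
    set c : ℝ := (1:ℝ)/((j:ℝ)+1) * ((m:ℝ)+1)^2 with hc
    have hcpos : 0 < c := by positivity
    have hvar := var_bound (x := x) hchain hC ((m+1)^2)
    have hml := memLp_S (μ := μ) (x := x) hmeas ((m+1)^2)
    have h := meas_ge_le_variance_div_sq (μ := μ) hml hcpos
    have hint := integral_S (μ := μ) (x := x) hmeas ((m+1)^2)
    rw [hint] at h
    have hseteq : s j m = {ω | c ≤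
        |(fun ω' => ∑ i ∈ Finset.Ioc 0 ((m+1)^2), if Xs i ω' = x then (1:ℝ) else 0) ω
          - ∑ i ∈ Finset.Ioc 0 ((m+1)^2), (μ {ω' | Xs i ω' = x}).toReal|} := rfl
    rw [hseteq]
    refine le_trans h (ENNReal.ofReal_le_ofReal ?_)
    have hcast : (((m+1)^2 : ℕ) : ℝ) = ((m:ℝ)+1)^2 := by push_cast; ring
    have hstep1 : variance (fun ω' => ∑ i ∈ Finset.Ioc 0 ((m+1)^2),
        if Xs i ω' = x then (1:ℝ) else 0) μ / c^2 ≤ (K * ((m:ℝ)+1)^2) / c^2 := by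
      apply div_le_div_of_nonneg_right ?_ (by positivity)
      · rw [← hcast]; exact hvar
    refine le_trans hstep1 (le_of_eq ?_)
    rw [hc]
    have hj1 : ((j:ℝ)+1) ≠ 0 := by positivity
    have hm1 : ((m:ℝ)+1) ≠ 0 := by positivity
    field_simp
  have hsum : ∀ j : ℕ, (∑' m, μ (s j m)) ≠ ⊤ := by
    intro j
    have base : Summable (fun n : ℕ => 1/((n:ℝ))^2) :=
      Real.summable_one_div_nat_pow.2 (by norm_num)
    have shifted : Summable (fun m : ℕ => 1/(((m+1:ℕ)):ℝ)^2) :=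
      (summable_nat_add_iff 1).2 base
    have hsummable : Summable (fun m : ℕ => K * ((j:ℝ)+1)^2 / ((m:ℝ)+1)^2) := by
      have := shifted.mul_left (K * ((j:ℝ)+1)^2)
      refine this.congr fun m => ?_
      push_cast
      rw [mul_one_div]
    have hle : ∑' m, μ (s j m)
        ≤ ∑' (m : ℕ), ENNReal.ofReal (K * ((j:ℝ)+1)^2 / ((m:ℝ)+1)^2) :=
      ENNReal.tsum_le_tsum (hcheb j)
    have heq : ∑' (m : ℕ), ENNReal.ofReal (K * ((j:ℝ)+1)^2 / ((m:ℝ)+1)^2)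
        = ENNReal.ofReal (∑' (m : ℕ), K * ((j:ℝ)+1)^2 / ((m:ℝ)+1)^2) :=
      (ENNReal.ofReal_tsum_of_nonneg (fun m => by positivity) hsummable).symm
    exact ne_top_of_le_ne_top (by rw [heq]; exact ENNReal.ofReal_ne_top) hle
  have hae : ∀ᵐ ω ∂μ, ∀ j : ℕ, ∀ᶠ m in atTop, ω ∉ s j m :=
    ae_all_iff.2 fun j => ae_eventually_notMem (hsum j)
  -- deterministic convergence of the means
  have hsqtop : Tendsto (fun m : ℕ => ((m:ℝ)^2)) atTop atTop := by
    refine tendsto_atTop_mono (fun m => ?_) tendsto_natCast_atTop_atTop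
    have : m ≤ m^2 := Nat.le_self_pow two_ne_zero m
    exact_mod_cast this
  have hmean0 : Tendsto (fun m : ℕ =>
      ((∑ i ∈ Finset.Ioc 0 (m^2), (μ {ω' | Xs i ω' = x}).toReal) / ((m:ℝ)^2) - π x))
      atTop (nhds 0) := by
    apply squeeze_zero_norm' (a := fun m : ℕ => C / ((m:ℝ)^2))
    · filter_upwards [eventually_ge_atTop 1] with m hm
      have hm0 : (0:ℝ) < ((m:ℝ))^2 := by
        have : (1:ℝ) ≤ (m:ℝ) := by exact_mod_cast hm
        positivity
      have hmb := mean_bound (x := x) hchain hC (m^2)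
      have hcast : (((m^2 : ℕ)) : ℝ) = ((m:ℝ))^2 := by push_cast; ring
      rw [hcast] at hmb
      rw [Real.norm_eq_abs]
      have heq : (∑ i ∈ Finset.Ioc 0 (m^2), (μ {ω' | Xs i ω' = x}).toReal) / ((m:ℝ)^2) - π x
          = ((∑ i ∈ Finset.Ioc 0 (m^2), (μ {ω' | Xs i ω' = x}).toReal) - ((m:ℝ)^2) * π x)
              / ((m:ℝ)^2) := by
        field_simp
      rw [heq, abs_div, abs_of_pos hm0]
      exact div_le_div_of_nonneg_right hmb hm0.le
    · exact Tendsto.div_atTop tendsto_const_nhds hsqtop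
  have hmean : Tendsto (fun m : ℕ =>
      (∑ i ∈ Finset.Ioc 0 (m^2), (μ {ω' | Xs i ω' = x}).toReal) / ((m:ℝ)^2))
      atTop (nhds (π x)) := by
    have := hmean0.add (tendsto_const_nhds (x := π x) (f := atTop))
    rw [zero_add] at this
    refine this.congr fun m => ?_
    ring
  -- a.e. conclusion
  filter_upwards [hae] with ω hω
  have hconv : Tendsto (fun W : ℕ =>
      (∑ i ∈ Finset.Ioc 0 W, if Xs i ω = x then (1:ℝ) else 0) / (W:ℝ))
      atTop (nhds (π x)) := by
    -- fluctuation along squares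
    have hT1 : Tendsto (fun m : ℕ =>
        ((∑ i ∈ Finset.Ioc 0 (m^2), if Xs i ω = x then (1:ℝ) else 0)
          - ∑ i ∈ Finset.Ioc 0 (m^2), (μ {ω' | Xs i ω' = x}).toReal) / ((m:ℝ)^2))
        atTop (nhds 0) := by
      rw [← tendsto_add_atTop_iff_nat 1, Metric.tendsto_atTop]
      intro ε hε
      obtain ⟨j, hj⟩ := exists_nat_one_div_lt hε
      obtain ⟨N, hN⟩ := eventually_atTop.1 (hω j)
      refine ⟨N, fun m hm => ?_⟩
      have hnot := hN m hm
      simp only [hs, Set.mem_setOf_eq, not_le] at hnot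
      rw [Real.dist_eq, sub_zero]
      have hm1 : (0:ℝ) < (((m:ℝ))+1)^2 := by positivity
      have hcast : (((m+1 : ℕ)) : ℝ) = ((m:ℝ))+1 := by push_cast; ring
      rw [abs_div]
      have habs : |((((m+1:ℕ)):ℝ)^2)| = (((m:ℝ))+1)^2 := by
        rw [hcast]; exact abs_of_pos hm1
      rw [habs]
      have hlt : |(∑ i ∈ Finset.Ioc 0 ((m+1)^2), if Xs i ω = x then (1:ℝ) else 0)
          - ∑ i ∈ Finset.Ioc 0 ((m+1)^2), (μ {ω' | Xs i ω' = x}).toReal|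
          / (((m:ℝ))+1)^2 < (1:ℝ)/((j:ℝ)+1) := by
        rw [div_lt_iff₀ hm1]
        calc |(∑ i ∈ Finset.Ioc 0 ((m+1)^2), if Xs i ω = x then (1:ℝ) else 0)
            - ∑ i ∈ Finset.Ioc 0 ((m+1)^2), (μ {ω' | Xs i ω' = x}).toReal|
            < (1:ℝ)/((j:ℝ)+1) * (((m:ℝ))+1)^2 := hnot
          _ = (1:ℝ)/((j:ℝ)+1) * (((m:ℝ))+1)^2 := rfl
      exact lt_trans hlt hj
    have hT2 := hT1.add hmean
    rw [zero_add] at hT2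
    have hT3 : Tendsto (fun m : ℕ =>
        (∑ i ∈ Finset.Ioc 0 (m^2), if Xs i ω = x then (1:ℝ) else 0) / ((m:ℝ)^2))
        atTop (nhds (π x)) := by
      refine hT2.congr fun m => ?_
      rw [← add_div, sub_add_cancel]
    -- glue along all W
    refine VFSL5.glue ?_ ?_ hT3
    · simp
    · intro n
      rw [Finset.sum_Ioc_succ_top (Nat.zero_le n)]
      have : (0:ℝ) ≤ if Xs (n+1) ω = x then (1:ℝ) else 0 := by split <;> norm_num
      linarith
  refine hconv.congr fun W => ?_
  rw [hIcc W]
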